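/- With f_x(r) = r ( e^{−(r−x)²/2} − e^{−(r+x)²/2} ) / (x √(2π)) for x > 0, and f_0(r) = √(2/π) r² e^{−r²/2}, one has ∫_0^∞ f_0(r)² dr = 3/(4√π), and lim_{x→0⁺} ∫_0^∞ f_x(r)² dr = 3/(4√π). -/

import Mathlib

open MeasureTheory ProbabilityTheory Filter Real

/-- The density of `((x+X)²+Y²+Z²)^{1/2}` for `X,Y,Z` i.i.d. standard normals, `x > 0`. -/
noncomputable def besselDens (x r : ℝ) : ℝ :=
  r * (Real.exp (-(r - x) ^ 2 / 2) - Real.exp (-(r + x) ^ 2 / 2)) / (x * Real.sqrt (2 * π))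

/-- The density of the Euclidean norm of a standard Gaussian vector in `ℝ³`. -/
noncomputable def besselDens0 (r : ℝ) : ℝ := Real.sqrt (2 / π) * r ^ 2 * Real.exp (-r ^ 2 / 2)

open Set

lemma aux_int2 : Integrable (fun u : ℝ => u ^ 2 * Real.exp (-u ^ 2)) := by
  simpa using integrable_rpow_mul_exp_neg_mul_sq one_pos (by norm_num : (-1:ℝ) < 2)

lemma aux_int1 : Integrable (fun u : ℝ => u * Real.exp (-u ^ 2)) := by
  simpa using integrable_mul_exp_neg_mul_sq one_pos

lemma aux_int0 : Integrable (fun u : ℝ => Real.exp (-u ^ 2)) := by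
  simpa using integrable_exp_neg_mul_sq one_pos

lemma aux_I2 : ∫ r in Ioi (0:ℝ), r ^ 2 * Real.exp (-r ^ 2) = Real.sqrt π / 4 := by
  have h := integral_rpow_mul_exp_neg_rpow (p := 2) (q := 2) two_pos (by norm_num)
  rw [show ((2:ℝ)+1)/2 = 1/2 + 1 by norm_num, Real.Gamma_add_one (by norm_num),
    Real.Gamma_one_half_eq] at h
  have e : ∀ r ∈ Ioi (0:ℝ), r ^ (2:ℝ) * Real.exp (-r ^ (2:ℝ)) = r ^ 2 * Real.exp (-r ^ 2) := by
    intro r hr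
    rw [show (2:ℝ) = ((2:ℕ):ℝ) by norm_num, Real.rpow_natCast]
  rw [← setIntegral_congr_fun measurableSet_Ioi e, h]; ring

lemma aux_I4 : ∫ r in Ioi (0:ℝ), r ^ 4 * Real.exp (-r ^ 2) = 3 * Real.sqrt π / 8 := by
  have h := integral_rpow_mul_exp_neg_rpow (p := 2) (q := 4) two_pos (by norm_num)
  rw [show ((4:ℝ)+1)/2 = (1/2 + 1) + 1 by norm_num, Real.Gamma_add_one (by norm_num),
    Real.Gamma_add_one (by norm_num), Real.Gamma_one_half_eq] at h
  have e : ∀ r ∈ Ioi (0:ℝ), r ^ (4:ℝ) * Real.exp (-r ^ (2:ℝ)) = r ^ 4 * Real.exp (-r ^ 2) := by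
    intro r hr
    rw [show (4:ℝ) = ((4:ℕ):ℝ) by norm_num, show (2:ℝ) = ((2:ℕ):ℝ) by norm_num,
      Real.rpow_natCast, Real.rpow_natCast]
  rw [← setIntegral_congr_fun measurableSet_Ioi e, h]; ring

lemma aux_shift (f : ℝ → ℝ) (a c : ℝ) :
    ∫ r in Ioi a, f (r + c) = ∫ u in Ioi (a + c), f u := by
  have A : MeasurableEmbedding (fun u : ℝ => u + c) :=
    (Homeomorph.addRight c).measurableEmbedding
  have hm : (volume : Measure ℝ).map (· + c) = volume := map_add_right_eq_self volume c
  calc ∫ r in Ioi a, f (r + c)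
      = ∫ u in (· + c) ⁻¹' Ioi (a + c), f (u + c) := by
        rw [Set.preimage_add_const_Ioi]; norm_num
    _ = ∫ u in Ioi (a + c), f u ∂((volume : Measure ℝ).map (· + c)) :=
        (A.setIntegral_map _ _).symm
    _ = ∫ u in Ioi (a + c), f u := by rw [hm]

lemma aux_full (x : ℝ) :
    ∫ u : ℝ, (u + x) ^ 2 * Real.exp (-u ^ 2)
      = Real.sqrt π * x ^ 2 + Real.sqrt π / 2 := by
  have h : (fun u : ℝ => (u + x) ^ 2 * Real.exp (-u ^ 2))
      = fun u => u ^ 2 * Real.exp (-u ^ 2)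
        + (2 * x * (u * Real.exp (-u ^ 2)) + x ^ 2 * Real.exp (-u ^ 2)) := by
    funext u; ring
  have hodd : ∫ u : ℝ, u * Real.exp (-u ^ 2) = 0 := by
    have h := integral_comp_neg_Iic (0:ℝ) (fun u => u * Real.exp (-u ^ 2))
    simp only [neg_sq, neg_mul, integral_neg, neg_zero] at h
    have h2 := intervalIntegral.integral_Iic_add_Ioi (b := (0:ℝ))
      aux_int1.integrableOn aux_int1.integrableOn
    linarith
  have heven : ∫ u : ℝ, u ^ 2 * Real.exp (-u ^ 2) = Real.sqrt π / 2 := by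
    have e : ∫ u : ℝ, u ^ 2 * Real.exp (-u ^ 2)
        = ∫ u : ℝ, |u| ^ 2 * Real.exp (-|u| ^ 2) := by simp [sq_abs]
    rw [e, integral_comp_abs (f := fun t : ℝ => t ^ 2 * Real.exp (-t ^ 2)), aux_I2]; ring
  have hg : ∫ u : ℝ, Real.exp (-u ^ 2) = Real.sqrt π := by
    simpa using integral_gaussian 1
  have j1 : Integrable (fun u : ℝ => 2 * x * (u * Real.exp (-u ^ 2))) :=
    aux_int1.const_mul _
  have j0 : Integrable (fun u : ℝ => x ^ 2 * Real.exp (-u ^ 2)) :=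
    aux_int0.const_mul _
  have j10 : Integrable (fun u : ℝ => 2 * x * (u * Real.exp (-u ^ 2))
      + x ^ 2 * Real.exp (-u ^ 2)) := j1.add j0
  rw [h, integral_add aux_int2 j10, integral_add j1 j0,
    integral_const_mul, integral_const_mul, hodd, heven, hg]
  ring

lemma aux_intf (x : ℝ) : Integrable (fun u : ℝ => (u + x) ^ 2 * Real.exp (-u ^ 2)) := by
  have h : (fun u : ℝ => (u + x) ^ 2 * Real.exp (-u ^ 2))
      = fun u => u ^ 2 * Real.exp (-u ^ 2)
        + ((2 * x) * (u * Real.exp (-u ^ 2)) + x ^ 2 * Real.exp (-u ^ 2)) := by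
    funext u; ring
  rw [h]
  exact aux_int2.add ((aux_int1.const_mul _).add (aux_int0.const_mul _))

lemma besselInt (x : ℝ) (hx : 0 < x) :
    ∫ r in Ioi (0:ℝ), besselDens x r ^ 2
      = (Real.sqrt π * x ^ 2 + Real.sqrt π / 2 - Real.exp (-x ^ 2) * (Real.sqrt π / 2))
        / (2 * π * x ^ 2) := by
  have hx0 : x ≠ 0 := ne_of_gt hx
  have hπ : π ≠ 0 := ne_of_gt Real.pi_pos
  have ig1 : Integrable (fun r : ℝ => r ^ 2 * Real.exp (-(r - x) ^ 2)) := by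
    have h := (aux_intf x).comp_sub_right x
    exact h.congr (Filter.Eventually.of_forall fun r => by simp)
  have ig2 : Integrable (fun r : ℝ => r ^ 2 * Real.exp (-(r + x) ^ 2)) := by
    have h := (aux_intf (-x)).comp_add_right x
    exact h.congr (Filter.Eventually.of_forall fun r => by simp)
  have hpt : ∀ r ∈ Ioi (0:ℝ), besselDens x r ^ 2 = (1/(2*π*x^2)) *
      (r^2 * Real.exp (-(r-x)^2) - 2*Real.exp (-x^2)*(r^2*Real.exp (-r^2))
        + r^2 * Real.exp (-(r+x)^2)) := by
    intro r _
    have e1 : Real.exp (-(r-x)^2) = Real.exp (-(r-x)^2/2) * Real.exp (-(r-x)^2/2) := by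
      rw [← Real.exp_add]; congr 1; ring
    have e2 : Real.exp (-(r+x)^2) = Real.exp (-(r+x)^2/2) * Real.exp (-(r+x)^2/2) := by
      rw [← Real.exp_add]; congr 1; ring
    have e3 : Real.exp (-x^2) * Real.exp (-r^2)
        = Real.exp (-(r-x)^2/2) * Real.exp (-(r+x)^2/2) := by
      rw [← Real.exp_add, ← Real.exp_add]; congr 1; ring
    rw [e1, e2, show (2:ℝ)*Real.exp (-x^2)*(r^2*Real.exp (-r^2))
        = 2*r^2*(Real.exp (-x^2)*Real.exp (-r^2)) from by ring, e3]
    unfold besselDens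
    rw [div_pow, mul_pow x (Real.sqrt (2*π)) 2, Real.sq_sqrt (by positivity : (0:ℝ) ≤ 2*π)]
    field_simp
    ring
  have igm : Integrable (fun r : ℝ => 2 * Real.exp (-x ^ 2) * (r ^ 2 * Real.exp (-r ^ 2))) :=
    aux_int2.const_mul _
  have igs : IntegrableOn (fun r : ℝ => r ^ 2 * Real.exp (-(r - x) ^ 2)
      - 2 * Real.exp (-x ^ 2) * (r ^ 2 * Real.exp (-r ^ 2))) (Ioi 0) :=
    (ig1.sub igm).integrableOn
  rw [setIntegral_congr_fun measurableSet_Ioi hpt, integral_const_mul,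
    integral_add igs ig2.integrableOn,
    integral_sub ig1.integrableOn igm.integrableOn]
  have hmid : ∫ r in Ioi (0:ℝ), 2*Real.exp (-x^2)*(r^2*Real.exp (-r^2))
      = 2*Real.exp (-x^2) * (Real.sqrt π / 4) := by
    rw [show (fun r : ℝ => 2*Real.exp (-x^2)*(r^2*Real.exp (-r^2)))
        = fun r : ℝ => (2*Real.exp (-x^2))*(r^2*Real.exp (-r^2)) from rfl,
      integral_const_mul, aux_I2]
  have h1 : ∫ r in Ioi (0:ℝ), r ^ 2 * Real.exp (-(r - x) ^ 2)
      = ∫ u in Ioi (-x), (u + x) ^ 2 * Real.exp (-u ^ 2) := by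
    have := aux_shift (fun u => (u + x) ^ 2 * Real.exp (-u ^ 2)) 0 (-x)
    rw [zero_add] at this
    rw [← this]
    refine setIntegral_congr_fun measurableSet_Ioi fun r _ => ?_
    rw [← sub_eq_add_neg, sub_add_cancel]
  have h2 : ∫ r in Ioi (0:ℝ), r ^ 2 * Real.exp (-(r + x) ^ 2)
      = ∫ u in Iic (-x), (u + x) ^ 2 * Real.exp (-u ^ 2) := by
    have hs := aux_shift (fun u => (u - x) ^ 2 * Real.exp (-u ^ 2)) 0 x
    rw [zero_add] at hs
    have hn := integral_comp_neg_Iic (-x) (fun u => (u - x) ^ 2 * Real.exp (-u ^ 2))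
    rw [neg_neg] at hn
    calc ∫ r in Ioi (0:ℝ), r ^ 2 * Real.exp (-(r + x) ^ 2)
        = ∫ r in Ioi (0:ℝ), (r + x - x) ^ 2 * Real.exp (-(r + x) ^ 2) := by
          refine setIntegral_congr_fun measurableSet_Ioi fun r _ => ?_
          norm_num
      _ = ∫ u in Ioi x, (u - x) ^ 2 * Real.exp (-u ^ 2) := hs
      _ = ∫ u in Iic (-x), (-u - x) ^ 2 * Real.exp (-(-u) ^ 2) := hn.symm
      _ = ∫ u in Iic (-x), (u + x) ^ 2 * Real.exp (-u ^ 2) := by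
          refine setIntegral_congr_fun measurableSet_Iic fun u _ => ?_
          rw [neg_sq]; congr 1; ring
  have hsum : (∫ r in Ioi (0:ℝ), r ^ 2 * Real.exp (-(r - x) ^ 2))
      + (∫ r in Ioi (0:ℝ), r ^ 2 * Real.exp (-(r + x) ^ 2))
      = Real.sqrt π * x ^ 2 + Real.sqrt π / 2 := by
    rw [h1, h2, ← aux_full x,
      ← intervalIntegral.integral_Iic_add_Ioi (b := -x)
        (aux_intf x).integrableOn (aux_intf x).integrableOn]
    ring
  rw [hmid]
  linear_combination (1/(2*π*x^2)) * hsum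

lemma lim1 : Tendsto (fun t : ℝ => (1 - Real.exp (-t)) / t)
    (nhdsWithin 0 {(0:ℝ)}ᶜ) (nhds 1) := by
  have hd : HasDerivAt (fun t : ℝ => 1 - Real.exp (-t)) 1 0 := by
    have h1 : HasDerivAt (fun t : ℝ => Real.exp (-t)) (-1) 0 := by
      have := (Real.hasDerivAt_exp (-0)).comp 0 (hasDerivAt_neg 0)
      simpa [Function.comp_def] using this
    simpa [Pi.sub_def] using (hasDerivAt_const (0:ℝ) (1:ℝ)).sub h1
  have := hasDerivAt_iff_tendsto_slope.mp hd
  refine this.congr fun t => ?_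
  simp [slope_def_field, div_eq_inv_mul]

lemma lim2 : Tendsto (fun x : ℝ => (1 - Real.exp (-x ^ 2)) / x ^ 2)
    (nhdsWithin 0 (Ioi 0)) (nhds 1) := by
  have hsq : Tendsto (fun x : ℝ => x ^ 2) (nhdsWithin 0 (Ioi 0))
      (nhdsWithin 0 {(0:ℝ)}ᶜ) := by
    rw [tendsto_nhdsWithin_iff]
    constructor
    · have : Tendsto (fun x : ℝ => x ^ 2) (nhds 0) (nhds 0) := by
        simpa using (continuous_pow 2).tendsto (0:ℝ)
      exact this.mono_left nhdsWithin_le_nhds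
    · filter_upwards [self_mem_nhdsWithin] with x hx
      exact pow_ne_zero 2 (ne_of_gt hx)
  exact lim1.comp hsq

lemma limF : Tendsto (fun x : ℝ =>
    (Real.sqrt π * x ^ 2 + Real.sqrt π / 2 - Real.exp (-x ^ 2) * (Real.sqrt π / 2))
      / (2 * π * x ^ 2)) (nhdsWithin 0 (Ioi 0)) (nhds (3 / (4 * Real.sqrt π))) := by
  have hπ : (0:ℝ) < π := Real.pi_pos
  have hs : Real.sqrt π * Real.sqrt π = π := Real.mul_self_sqrt hπ.le
  have hs0 : Real.sqrt π ≠ 0 := ne_of_gt (Real.sqrt_pos.mpr hπ)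
  have base : Tendsto (fun x : ℝ =>
      Real.sqrt π / (2 * π) * (1 + (1/2) * ((1 - Real.exp (-x ^ 2)) / x ^ 2)))
      (nhdsWithin 0 (Ioi 0)) (nhds (Real.sqrt π / (2 * π) * (1 + (1/2) * 1))) :=
    (tendsto_const_nhds.add (lim2.const_mul (1/2))).const_mul _
  have hval : Real.sqrt π / (2 * π) * (1 + (1/2) * 1) = 3 / (4 * Real.sqrt π) := by
    field_simp
    linear_combination (12:ℝ) * hs
  rw [hval] at base
  refine base.congr' ?_
  filter_upwards [self_mem_nhdsWithin] with x hx
  have hx0 : x ≠ 0 := ne_of_gt hx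
  field_simp
  ring

/-- `∫_0^∞ f_0(r)² dr = 3/(4√π)` and `∫_0^∞ f_x(r)² dr → 3/(4√π)` as `x → 0⁺`. -/
theorem integral_sq_besselDens :
    (∫ r in Set.Ioi (0:ℝ), besselDens0 r ^ 2) = 3 / (4 * Real.sqrt π) ∧
    Tendsto (fun x : ℝ => ∫ r in Set.Ioi (0:ℝ), besselDens x r ^ 2)
      (nhdsWithin 0 (Set.Ioi 0)) (nhds (3 / (4 * Real.sqrt π))) := by
  constructor
  · have hπ : (0:ℝ) < π := Real.pi_pos
    have hs : Real.sqrt π * Real.sqrt π = π := Real.mul_self_sqrt hπ.le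
    have hs0 : Real.sqrt π ≠ 0 := ne_of_gt (Real.sqrt_pos.mpr hπ)
    have hpt : ∀ r ∈ Ioi (0:ℝ), besselDens0 r ^ 2
        = (2/π) * (r ^ 4 * Real.exp (-r ^ 2)) := by
      intro r _
      unfold besselDens0
      have h := Real.sq_sqrt (show (0:ℝ) ≤ 2/π by positivity)
      have he : Real.exp (-r^2/2) * Real.exp (-r^2/2) = Real.exp (-r^2) := by
        rw [← Real.exp_add]; congr 1; ring
      linear_combination (r^4 * Real.exp (-r^2/2) * Real.exp (-r^2/2)) * h
        + (2/π) * r^4 * he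
    rw [setIntegral_congr_fun measurableSet_Ioi hpt, integral_const_mul, aux_I4]
    field_simp
    linear_combination (8:ℝ) * hs
  · refine limF.congr' ?_
    filter_upwards [self_mem_nhdsWithin] with x hx
    exact (besselInt x hx).symm
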